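/- The graph G = K_{(ν+n)/2} ∨ ((ν−n)/2)K₁ (the join of a complete graph on (ν+n)/2 vertices with (ν−n)/2 isolated vertices), where ν ≡ n (mod 2), is n-factor-critical and has independence number exactly (ν−n)/2. -/

import Mathlib

open SimpleGraph

/-- `G` has a perfect matching. -/
def HasPM {W : Type*} (G : SimpleGraph W) : Prop :=
  ∃ M : G.Subgraph, M.IsPerfectMatching

/-- `G` is `k`-extendable: `G` is connected, has a matching of size `k`, and every
matching of size `k` extends to a perfect matching. -/
def IsKExtendable {W : Type*} (G : SimpleGraph W) (k : ℕ) : Prop :=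
  G.Connected ∧
  (∃ M : G.Subgraph, M.IsMatching ∧ M.verts.ncard = 2 * k) ∧
  ∀ M : G.Subgraph, M.IsMatching → M.verts.ncard = 2 * k →
    ∃ P : G.Subgraph, P.IsPerfectMatching ∧ M ≤ P

/-- `G` is `n`-factor-critical: deleting any `n` vertices leaves a graph with a
perfect matching. -/
def IsNFactorCritical {W : Type*} (G : SimpleGraph W) (n : ℕ) : Prop :=
  ∀ S : Finset W, S.card = n → HasPM (G.induce ((↑S : Set W)ᶜ))

/-- The independence number of `G`. -/
noncomputable def indepNum {W : Type*} (G : SimpleGraph W) : ℕ :=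
  sSup {n | ∃ s : Finset W, (∀ u ∈ s, ∀ v ∈ s, ¬ G.Adj u v) ∧ s.card = n}

/-- The number of odd connected components of `G`. -/
noncomputable def numOddComponents {W : Type*} (G : SimpleGraph W) : ℕ :=
  Nat.card {c : G.ConnectedComponent // Odd (Nat.card c.supp)}

/-- `G` is `k½`-extendable: `G` is connected and for every vertex `v`, `G - v` has a
matching of size `k` and every matching of size `k` in `G - v` extends to a perfect
matching of `G - v`. -/
def IsHalfExtendable {W : Type*} (G : SimpleGraph W) (k : ℕ) : Prop :=
  G.Connected ∧
  ∀ v : W,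
    (∃ M : (G.induce ({v} : Set W)ᶜ).Subgraph, M.IsMatching ∧ M.verts.ncard = 2 * k) ∧
    ∀ M : (G.induce ({v} : Set W)ᶜ).Subgraph, M.IsMatching → M.verts.ncard = 2 * k →
      ∃ P : (G.induce ({v} : Set W)ᶜ).Subgraph, P.IsPerfectMatching ∧ M ≤ P

/-- The join of two graphs: all edges between the two vertex classes are added. -/
def graphJoin {α β : Type*} (G : SimpleGraph α) (H : SimpleGraph β) :
    SimpleGraph (α ⊕ β) :=
  SimpleGraph.fromRel (fun a b =>
    match a, b with
    | Sum.inl u, Sum.inl v => G.Adj u v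
    | Sum.inr u, Sum.inr v => H.Adj u v
    | _, _ => True)

/-- The disjoint union of two graphs. -/
def graphUnion {α β : Type*} (G : SimpleGraph α) (H : SimpleGraph β) :
    SimpleGraph (α ⊕ β) :=
  SimpleGraph.fromRel (fun a b =>
    match a, b with
    | Sum.inl u, Sum.inl v => G.Adj u v
    | Sum.inr u, Sum.inr v => H.Adj u v
    | _, _ => False)

/-- The join `G ∨ K₁`: one new vertex joined to every vertex of `G`. -/
def joinK1 {W : Type*} (G : SimpleGraph W) : SimpleGraph (W ⊕ Unit) :=
  graphJoin G (⊥ : SimpleGraph Unit)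

/-- `G` is the join of a graph on `n` vertices with the disjoint union of two cliques
of size `m` (intrinsic formulation of `G = G₀ ∨ (K_m ∪ K_m)`). -/
def IsJoinTwoCliques {W : Type*} [Fintype W] [DecidableEq W] (G : SimpleGraph W) (n m : ℕ) : Prop :=
  ∃ S A B : Finset W,
    Disjoint S A ∧ Disjoint S B ∧ Disjoint A B ∧ S ∪ A ∪ B = Finset.univ ∧
    S.card = n ∧ A.card = m ∧ B.card = m ∧
    (∀ u ∈ A, ∀ v ∈ A, u ≠ v → G.Adj u v) ∧
    (∀ u ∈ B, ∀ v ∈ B, u ≠ v → G.Adj u v) ∧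
    (∀ u ∈ A, ∀ v ∈ B, ¬ G.Adj u v) ∧
    (∀ u ∈ S, ∀ v ∈ A ∪ B, G.Adj u v)

/-- `A` induces in `G` the disjoint union of two factor-critical connected components,
each of size at least `minSize`. -/
def TwoFCComponents {W : Type*} [DecidableEq W] (G : SimpleGraph W) (A : Finset W) (minSize : ℕ) : Prop :=
  ∃ B C : Finset W,
    Disjoint B C ∧ B ∪ C = A ∧ minSize ≤ B.card ∧ minSize ≤ C.card ∧
    (∀ u ∈ B, ∀ v ∈ C, ¬ G.Adj u v) ∧
    (G.induce (↑B : Set W)).Connected ∧ (G.induce (↑C : Set W)).Connected ∧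
    IsNFactorCritical (G.induce (↑B : Set W)) 1 ∧
    IsNFactorCritical (G.induce (↑C : Set W)) 1

section Aux

open SimpleGraph

/-- A fixed-point-free involution along edges gives a perfect matching. -/
lemma pm_of_involution {V : Type*} (G : SimpleGraph V) (f : V → V)
    (hinv : ∀ v, f (f v) = v) (hadj : ∀ v, G.Adj v (f v)) :
    ∃ M : G.Subgraph, M.IsPerfectMatching := by
  refine ⟨{ verts := Set.univ
            Adj := fun a b => b = f a ∨ a = f b
            adj_sub := ?_
            edge_vert := fun _ => Set.mem_univ _
            symm := ⟨fun a b h => Or.symm h⟩ }, ?_, fun v => Set.mem_univ v⟩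
  · rintro v w (rfl | rfl)
    · exact hadj v
    · exact (hadj w).symm
  · rintro v -
    refine ⟨f v, Or.inl rfl, ?_⟩
    rintro w (rfl | rfl)
    · rfl
    · exact (hinv w).symm

/-- A fixed-point-free involution on `Fin p ⊕ Fin q` (with `q ≤ p`, `p + q` even)
mapping the right side into the left side. -/
lemma exists_invol (p q : ℕ) (hqp : q ≤ p) (hpar : (p + q) % 2 = 0) :
    ∃ σ : Fin p ⊕ Fin q → Fin p ⊕ Fin q,
      (∀ x, σ (σ x) = x) ∧ (∀ x, σ x ≠ x) ∧
      (∀ j, ∃ i, σ (Sum.inr j) = Sum.inl i) := by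
  refine ⟨Sum.elim
      (fun i => if h : (i : ℕ) < q then Sum.inr ⟨i, h⟩
        else if h2 : ((i : ℕ) - q) % 2 = 0 then
          Sum.inl ⟨(i : ℕ) + 1, by omega⟩
        else Sum.inl ⟨(i : ℕ) - 1, by omega⟩)
      (fun j => Sum.inl ⟨(j : ℕ), lt_of_lt_of_le j.2 hqp⟩), ?_, ?_, ?_⟩
  · rintro (i | j)
    · simp only [Sum.elim_inl]
      by_cases h : (i : ℕ) < q
      · simp [h]
      · rw [dif_neg h]
        by_cases h2 : ((i : ℕ) - q) % 2 = 0
        · rw [dif_pos h2]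
          simp only [Sum.elim_inl]
          rw [dif_neg (by omega), dif_neg (by omega)]
          refine congrArg Sum.inl (Fin.ext ?_)
          show (i : ℕ) + 1 - 1 = i
          omega
        · rw [dif_neg h2]
          simp only [Sum.elim_inl]
          rw [dif_neg (by omega), dif_pos (by omega)]
          refine congrArg Sum.inl (Fin.ext ?_)
          show (i : ℕ) - 1 + 1 = i
          omega
    · simp only [Sum.elim_inr, Sum.elim_inl]
      rw [dif_pos (by simp)]
  · rintro (i | j)
    · simp only [Sum.elim_inl]
      by_cases h : (i : ℕ) < q
      · simp [h]
      · rw [dif_neg h]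
        by_cases h2 : ((i : ℕ) - q) % 2 = 0
        · rw [dif_pos h2]
          intro hc
          have := Sum.inl_injective hc
          have := Fin.mk.injEq ((i : ℕ) + 1) (by omega) (i : ℕ) i.2 ▸ this
          omega
        · rw [dif_neg h2]
          intro hc
          have := Fin.val_eq_of_eq (Sum.inl_injective hc)
          simp at this
          omega
    · simp
  · intro j
    exact ⟨_, rfl⟩

end Aux

/-- The graph K_{(ν+n)/2} ∨ ((ν−n)/2)K₁ is n-factor-critical with independence number
exactly (ν−n)/2. -/
theorem join_clique_indep_factorCritical (ν n : ℕ)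
    (hpar : ν % 2 = n % 2) (hlt : n < ν) :
    IsNFactorCritical
        (graphJoin (⊤ : SimpleGraph (Fin ((ν + n) / 2)))
          (⊥ : SimpleGraph (Fin ((ν - n) / 2)))) n ∧
      _root_.indepNum
        (graphJoin (⊤ : SimpleGraph (Fin ((ν + n) / 2)))
          (⊥ : SimpleGraph (Fin ((ν - n) / 2)))) = (ν - n) / 2 := by
  classical
  set k := (ν + n) / 2 with hkdef
  set m := (ν - n) / 2 with hmdef
  have hbasic : k + m = ν ∧ m + n = k ∧ 1 ≤ m ∧ 2 * m = ν - n := by omega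
  set W := Fin k ⊕ Fin m with hWdef
  set G : SimpleGraph W :=
    graphJoin (⊤ : SimpleGraph (Fin k)) (⊥ : SimpleGraph (Fin m)) with hGdef
  have hGadj : ∀ u v : W, G.Adj u v ↔ u ≠ v ∧ (u.isLeft = true ∨ v.isLeft = true) := by
    intro u v
    rcases u with u | u <;> rcases v with v | v <;>
      simp [hGdef, graphJoin, SimpleGraph.fromRel_adj, Sum.isLeft] <;> tauto
  constructor
  · intro S hS
    haveI : Fintype ↥((↑S : Set W)ᶜ) := Fintype.ofFinite _
    set V' := ↥((↑S : Set W)ᶜ) with hV'def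
    set P : V' → Prop := fun v => ((v : W).isLeft = true) with hPdef
    haveI : DecidablePred P := fun v => by rw [hPdef]; infer_instance
    set p := Nat.card {v : V' // P v} with hpdef
    set q := Nat.card {v : V' // ¬ P v} with hqdef
    have hcardV : Nat.card V' = ν - n := by
      have h1 : (↑S : Set W).ncard + ((↑S : Set W)ᶜ).ncard = Nat.card W :=
        Set.ncard_add_ncard_compl _
      have h2 : (↑S : Set W).ncard = n := by rw [Set.ncard_coe_finset, hS]
      have h3 : Nat.card W = k + m := by
        simp [hWdef, Nat.card_eq_fintype_card]
      have h4 : Nat.card V' = ((↑S : Set W)ᶜ).ncard := Nat.card_coe_set_eq _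
      omega
    have hpq : p + q = ν - n := by
      have h1 : Nat.card ({v : V' // P v} ⊕ {v : V' // ¬ P v}) = Nat.card V' :=
        Nat.card_congr (Equiv.sumCompl P)
      rw [Nat.card_sum] at h1
      omega
    have key : ∀ x : {v : V' // ¬ P v}, ∃ j : Fin m, ((x.val : W)) = Sum.inr j := by
      rintro ⟨⟨(u | j), hmem⟩, hx⟩
      · exact absurd rfl hx
      · exact ⟨j, rfl⟩
    have hq : q ≤ m := by
      have hinj : Function.Injective
          fun x : {v : V' // ¬ P v} => Classical.choose (key x) := by
        intro a b hab
        have ha := Classical.choose_spec (key a)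
        have hb := Classical.choose_spec (key b)
        apply Subtype.ext; apply Subtype.ext
        rw [ha, hb]
        exact congrArg Sum.inr hab
      calc q ≤ Nat.card (Fin m) := Nat.card_le_card_of_injective _ hinj
        _ = m := by simp
    have hqp : q ≤ p := by omega
    have hpar2 : (p + q) % 2 = 0 := by omega
    obtain ⟨σ, hσ2, hσne, hσr⟩ := exists_invol p q hqp hpar2
    set eP : {v : V' // P v} ≃ Fin p := Finite.equivFin _ with hePdef
    set eQ : {v : V' // ¬ P v} ≃ Fin q := Finite.equivFin _ with heQdef
    set e : V' ≃ Fin p ⊕ Fin q :=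
      (Equiv.sumCompl P).symm.trans (Equiv.sumCongr eP eQ) with hedef
    set f : V' → V' := fun v => e.symm (σ (e v)) with hfdef
    have hfe : ∀ v, f (f v) = v := by
      intro v
      simp [hfdef, hσ2]
    have hleft : ∀ x : Fin p, P (e.symm (Sum.inl x)) := by
      intro x
      have h : e.symm (Sum.inl x) = ((eP.symm x : {v : V' // P v}) : V') := by
        simp [hedef]
      rw [h]
      exact (eP.symm x).2
    have hfP : ∀ v : V', ¬ P v → P (f v) := by
      intro v hv
      have hev : e v = Sum.inr (eQ ⟨v, hv⟩) := by
        simp [hedef, Equiv.sumCompl_symm_apply_of_neg hv]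
      obtain ⟨i, hi⟩ := hσr (eQ ⟨v, hv⟩)
      have h : f v = e.symm (Sum.inl i) := by
        simp only [hfdef]
        rw [hev, hi]
      rw [h]
      exact hleft i
    have hfne : ∀ v, f v ≠ v := by
      intro v h
      apply hσne (e v)
      have h2 := congrArg e h
      simpa [hfdef] using h2
    have hadjf : ∀ v : V', (G.induce ((↑S : Set W)ᶜ)).Adj v (f v) := by
      intro v
      show G.Adj (v : W) ((f v : V') : W)
      rw [hGadj]
      refine ⟨?_, ?_⟩
      · intro h
        exact hfne v (Subtype.ext h).symm
      · by_cases hv : P v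
        · exact Or.inl hv
        · exact Or.inr (hfP v hv)
    exact pm_of_involution _ f hfe hadjf
  · have hm1 : 1 ≤ m := by omega
    set emb : Fin m ↪ W := ⟨Sum.inr, Sum.inr_injective⟩ with hembdef
    have hmem : m ∈ {t | ∃ s : Finset W,
        (∀ u ∈ s, ∀ v ∈ s, ¬ G.Adj u v) ∧ s.card = t} := by
      refine ⟨Finset.univ.map emb, ?_, by simp⟩
      intro u hu v hv
      rw [Finset.mem_map] at hu hv
      obtain ⟨a, -, rfl⟩ := hu
      obtain ⟨b, -, rfl⟩ := hv
      rw [hGadj]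
      simp [hembdef]
    have hub : ∀ t ∈ {t | ∃ s : Finset W,
        (∀ u ∈ s, ∀ v ∈ s, ¬ G.Adj u v) ∧ s.card = t}, t ≤ m := by
      rintro t ⟨s, hind, rfl⟩
      by_cases hc : ∃ u : Fin k, Sum.inl u ∈ s
      · obtain ⟨u, hu⟩ := hc
        have hsub : s ⊆ {Sum.inl u} := by
          intro x hx
          rw [Finset.mem_singleton]
          by_contra hne
          exact hind _ hu _ hx
            ((hGadj _ _).2 ⟨fun h => hne h.symm, Or.inl rfl⟩)
        calc s.card ≤ ({Sum.inl u} : Finset W).card := Finset.card_le_card hsub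
          _ = 1 := Finset.card_singleton _
          _ ≤ m := hm1
      · push_neg at hc
        have hsub : s ⊆ Finset.univ.map emb := by
          intro x hx
          rcases x with xu | xj
          · exact absurd hx (hc xu)
          · rw [Finset.mem_map]
            exact ⟨xj, Finset.mem_univ _, rfl⟩
        calc s.card ≤ (Finset.univ.map emb).card := Finset.card_le_card hsub
          _ = m := by simp
    show _root_.indepNum G = m
    unfold _root_.indepNum
    exact le_antisymm (csSup_le ⟨m, hmem⟩ hub)
      (le_csSup ⟨m, fun t ht => hub t ht⟩ hmem)
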